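/- In the beauty contest environment, take any K-class analogy partition (Θ_k)_{k=1}^K such that the conditional means θ̄₁, …, θ̄_K are pairwise distinct. Then there exists r* ∈ (0,1) such that for every r with r* < r < 1, the partition is locally clustered with respect to the ABEE strategy a_r; hence, when both players use this analogy partition and play a_r, the pair forms a clustered analogy-based expectation equilibrium. -/

import Mathlib

open MeasureTheory

/-- Conditional mean of `h` on the set `S` under the measure `ν`. -/
noncomputable def condMean (ν : Measure ℝ) (h : ℝ → ℝ) (S : Set ℝ) : ℝ :=
  (∫ θ in S, h θ ∂ν) / (ν S).toReal

/-- **Self-attractive analogy partitions in the beauty contest game** (Proposition 2).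

For any `K`-class analogy partition `(Θ k)` of the (bounded) support of `θ ∼ ν` whose
conditional means `θ̄_k = E_ν[θ | Θ k]` are pairwise distinct, there is `r* ∈ (0, 1)`
such that for every coordination weight `r ∈ (r*, 1)` the partition is locally clustered
with respect to the ABEE strategy `a_r θ = (1 - r) θ + r θ̄_k` (for `θ ∈ Θ k`); hence both
players using this partition and playing `a_r` form a clustered ABEE. -/
theorem beauty_contest_self_attractive
    (ν : Measure ℝ) [IsProbabilityMeasure ν]
    (K : ℕ) (hK : 1 ≤ K) (Θ : Fin K → Set ℝ)
    (hmeas : ∀ k, MeasurableSet (Θ k))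
    (hdisj : Pairwise fun k k' => Disjoint (Θ k) (Θ k'))
    (hcover : ν (⋃ k, Θ k) = 1)
    (hpos : ∀ k, 0 < ν (Θ k))
    (hbdd : Bornology.IsBounded (⋃ k, Θ k))
    (hdist : ∀ k k' : Fin K, k ≠ k' →
      condMean ν (fun θ => θ) (Θ k) ≠ condMean ν (fun θ => θ) (Θ k')) :
    ∃ rstar : ℝ, 0 < rstar ∧ rstar < 1 ∧
      ∀ r : ℝ, rstar < r → r < 1 →
        ∀ k k' : Fin K, ∀ θ ∈ Θ k,
          ((1 - r) * θ + r * condMean ν (fun θ' => θ') (Θ k)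
              - condMean ν (fun θ' => θ') (Θ k)) ^ 2 ≤
            ((1 - r) * θ + r * condMean ν (fun θ' => θ') (Θ k)
              - condMean ν (fun θ' => θ') (Θ k')) ^ 2 := by
  set m : Fin K → ℝ := fun k => condMean ν (fun θ' => θ') (Θ k) with hm
  -- a bound on the support
  obtain ⟨M0, hM0⟩ := hbdd.exists_norm_le
  set M : ℝ := max M0 0 with hMdef
  have hMnn : 0 ≤ M := le_max_right _ _
  have hM : ∀ k, ∀ θ ∈ Θ k, |θ| ≤ M := by
    intro k θ hθ
    have := hM0 θ (Set.mem_iUnion.mpr ⟨k, hθ⟩)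
    rw [Real.norm_eq_abs] at this
    exact this.trans (le_max_left _ _)
  -- conditional means are bounded by M
  have hmb : ∀ k, |m k| ≤ M := by
    intro k
    have hfin : ν (Θ k) < ⊤ := measure_lt_top ν _
    have htpos : 0 < (ν (Θ k)).toReal :=
      ENNReal.toReal_pos (hpos k).ne' hfin.ne
    have hI : ‖∫ θ in Θ k, θ ∂ν‖ ≤ M * (ν (Θ k)).toReal := by
      apply norm_setIntegral_le_of_norm_le_const hfin
      · intro x hx
        rw [Real.norm_eq_abs]
        exact hM k x hx
    have : |m k| = ‖∫ θ in Θ k, θ ∂ν‖ / (ν (Θ k)).toReal := by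
      rw [hm]
      simp only [condMean, abs_div, Real.norm_eq_abs,
        abs_of_pos htpos]
    rw [this, div_le_iff₀ htpos]
    exact hI
  -- minimal distance between distinct prototypes
  have hd : ∃ d : ℝ, 0 < d ∧ ∀ k k' : Fin K, k ≠ k' → d ≤ |m k - m k'| := by
    set s : Finset ℝ :=
      (Finset.univ.offDiag).image (fun p : Fin K × Fin K => |m p.1 - m p.2|) with hs
    by_cases hne : s.Nonempty
    · refine ⟨s.min' hne, ?_, ?_⟩
      · obtain ⟨x, hx⟩ := Finset.mem_image.mp (s.min'_mem hne)
        obtain ⟨hx1, hx2⟩ := hx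
        have hxne : x.1 ≠ x.2 := (Finset.mem_offDiag.mp hx1).2.2
        rw [← hx2]
        exact abs_pos.mpr (sub_ne_zero.mpr (hdist _ _ hxne))
      · intro k k' hkk
        apply Finset.min'_le
        exact Finset.mem_image.mpr ⟨(k, k'),
          Finset.mem_offDiag.mpr ⟨Finset.mem_univ _, Finset.mem_univ _, hkk⟩, rfl⟩
    · refine ⟨1, one_pos, ?_⟩
      intro k k' hkk
      exact absurd ⟨_, Finset.mem_image.mpr ⟨(k, k'),
        Finset.mem_offDiag.mpr ⟨Finset.mem_univ _, Finset.mem_univ _, hkk⟩, rfl⟩⟩ hne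
  obtain ⟨d, hdpos, hdle⟩ := hd
  refine ⟨max (1/2) (1 - d / (4 * (M + 1))), ?_, ?_, ?_⟩
  · exact lt_of_lt_of_le (by norm_num) (le_max_left _ _)
  · apply max_lt (by norm_num)
    have : 0 < d / (4 * (M + 1)) := by positivity
    linarith
  · intro r hr hr1 k k' θ hθ
    by_cases hkk : k = k'
    · subst hkk; exact le_refl _
    have hrd : 1 - r < d / (4 * (M + 1)) := by
      have := lt_of_le_of_lt (le_max_right (1/2 : ℝ) _) hr
      linarith
    have hrpos : 0 < 1 - r := by linarith
    -- key quantities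
    have hθM : |θ - m k| ≤ 2 * (M + 1) := by
      have h1 := hM k θ hθ
      have h2 := hmb k
      calc |θ - m k| ≤ |θ| + |m k| := abs_sub _ _
        _ ≤ 2 * (M + 1) := by linarith
    set a : ℝ := (1 - r) * (θ - m k) with ha
    have haabs : |a| ≤ d / 2 := by
      rw [ha, abs_mul, abs_of_pos hrpos]
      calc (1 - r) * |θ - m k| ≤ (d / (4 * (M + 1))) * (2 * (M + 1)) := by
            apply mul_le_mul (le_of_lt hrd) hθM (abs_nonneg _)
            positivity
        _ = d / 2 := by field_simp; ring
    have hbabs : d / 2 ≤ |a + (m k - m k')| := by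
      have h1 : d ≤ |m k - m k'| := hdle k k' hkk
      have h2 : |m k - m k'| - |a| ≤ |a + (m k - m k')| := by
        have := abs_sub_abs_le_abs_sub (m k - m k') (-a)
        simp only [abs_neg, sub_neg_eq_add] at this
        calc |m k - m k'| - |a| ≤ |m k - m k' + a| := this
          _ = |a + (m k - m k')| := by ring_nf
      linarith
    have hLHS : (1 - r) * θ + r * m k - m k = a := by rw [ha]; ring
    have hRHS : (1 - r) * θ + r * m k - m k' = a + (m k - m k') := by rw [ha]; ring
    rw [hLHS, hRHS, ← sq_abs a, ← sq_abs (a + (m k - m k'))]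
    exact pow_le_pow_left₀ (abs_nonneg _) (haabs.trans hbabs) 2
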